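/- For a positive measure μ on (0,∞), the function s ↦ e^{-xs} s^{λ-1} ∫_s^∞ t^{-λ} dμ(t) is Lebesgue integrable on (0,∞) for some (equivalently, all) x > 0 if and only if ∫₀^1 dμ(t) < ∞ and ∫₁^∞ t^{-λ} dμ(t) < ∞. -/

import Mathlib

open Real Set MeasureTheory ENNReal


lemma wmeas (x lam : ℝ) :
    Measurable fun s : ℝ => ENNReal.ofReal (Real.exp (-x * s) * s ^ (lam - 1)) := by
  fun_prop

lemma fmeas (lam : ℝ) : Measurable fun t : ℝ => ENNReal.ofReal (t ^ (-lam)) := by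
  fun_prop

-- Tonelli swap
lemma swap_lemma (ν : Measure ℝ) [SFinite ν] {w : ℝ → ℝ≥0∞} (hw : Measurable w) :
    ∫⁻ s in Set.Ioi (0:ℝ), w s * ν (Set.Ioi s) =
      ∫⁻ t, (∫⁻ s in Set.Ioo 0 t, w s) ∂ν := by
  have key : ∀ s : ℝ, w s * ν (Set.Ioi s)
      = ∫⁻ t, (Set.Ioi s).indicator (fun _ => w s) t ∂ν := by
    intro s
    rw [lintegral_indicator_const measurableSet_Ioi]
  simp_rw [key]
  rw [lintegral_lintegral_swap]
  · refine lintegral_congr fun t => ?_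
    have : ∀ s : ℝ, (Set.Ioi s).indicator (fun _ => w s) t = (Set.Iio t).indicator w s := by
      intro s
      simp only [Set.indicator_apply, Set.mem_Ioi, Set.mem_Iio]
    simp_rw [this]
    rw [lintegral_indicator measurableSet_Iio, Measure.restrict_restrict measurableSet_Iio,
      Set.Iio_inter_Ioi]
  · have : (Function.uncurry fun s t => (Set.Ioi s).indicator (fun _ => w s) t)
        = Set.indicator {p : ℝ × ℝ | p.1 < p.2} (fun p => w p.1) := by
      ext p
      simp only [Function.uncurry, Set.indicator_apply, Set.mem_Ioi, Set.mem_setOf_eq]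
    rw [this]
    exact ((hw.comp measurable_fst).indicator
      (measurableSet_lt measurable_fst measurable_snd)).aemeasurable

lemma lint_rpow {lam : ℝ} (hlam : 0 < lam) {t : ℝ} (ht : 0 < t) :
    ∫⁻ s in Set.Ioo (0:ℝ) t, ENNReal.ofReal (s ^ (lam - 1)) = ENNReal.ofReal (t ^ lam / lam) := by
  have hint : IntegrableOn (fun s : ℝ => s ^ (lam - 1)) (Set.Ioo 0 t) := by
    have h := (intervalIntegral.intervalIntegrable_rpow' (a := 0) (b := t) (r := lam - 1) (by linarith))
    exact ((intervalIntegrable_iff_integrableOn_Ioc_of_le ht.le).mp h).mono_set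
      Set.Ioo_subset_Ioc_self
  rw [← ofReal_integral_eq_lintegral_ofReal hint ?_]
  · congr 1
    rw [← MeasureTheory.integral_Ioc_eq_integral_Ioo, ← intervalIntegral.integral_of_le ht.le,
      integral_rpow (Or.inl (by linarith))]
    rw [sub_add_cancel, Real.zero_rpow hlam.ne']
    ring
  · filter_upwards [ae_restrict_mem measurableSet_Ioo] with s hs
    exact Real.rpow_nonneg hs.1.le _

lemma lower_bound {lam x : ℝ} (hlam : 0 < lam) (hx : 0 < x) {t : ℝ} (ht : 0 < t) :
    ENNReal.ofReal (Real.exp (-x * t) * (t ^ lam / lam)) ≤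
      ∫⁻ s in Set.Ioo (0:ℝ) t, ENNReal.ofReal (Real.exp (-x * s) * s ^ (lam - 1)) := by
  calc ENNReal.ofReal (Real.exp (-x * t) * (t ^ lam / lam))
      = ENNReal.ofReal (Real.exp (-x * t)) * ENNReal.ofReal (t ^ lam / lam) :=
        ENNReal.ofReal_mul (Real.exp_nonneg _)
    _ = ∫⁻ s in Set.Ioo (0:ℝ) t, ENNReal.ofReal (Real.exp (-x * t)) *
          ENNReal.ofReal (s ^ (lam - 1)) := by
        rw [lintegral_const_mul _ (by fun_prop), lint_rpow hlam ht]
    _ ≤ ∫⁻ s in Set.Ioo (0:ℝ) t, ENNReal.ofReal (Real.exp (-x * s) * s ^ (lam - 1)) := by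
        refine setLIntegral_mono (by fun_prop) fun s hs => ?_
        rw [← ENNReal.ofReal_mul (Real.exp_nonneg _)]
        refine ENNReal.ofReal_le_ofReal (mul_le_mul_of_nonneg_right ?_ (Real.rpow_nonneg hs.1.le _))
        exact Real.exp_le_exp.mpr (by nlinarith [hs.2])

lemma upper_bound {lam x : ℝ} (hlam : 0 < lam) (hx : 0 < x) {t : ℝ} (ht : 0 < t) :
    ∫⁻ s in Set.Ioo (0:ℝ) t, ENNReal.ofReal (Real.exp (-x * s) * s ^ (lam - 1)) ≤
      ENNReal.ofReal (t ^ lam / lam) := by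
  rw [← lint_rpow hlam ht]
  refine setLIntegral_mono (by fun_prop) fun s hs => ?_
  refine ENNReal.ofReal_le_ofReal ?_
  have h1 : Real.exp (-x * s) ≤ 1 := Real.exp_le_one_iff.mpr (by nlinarith [hs.1])
  nlinarith [Real.rpow_nonneg hs.1.le (lam - 1)]

lemma gamma_finite {lam x : ℝ} (hlam : 0 < lam) (hx : 0 < x) :
    ∫⁻ s in Set.Ioi (0:ℝ), ENNReal.ofReal (Real.exp (-x * s) * s ^ (lam - 1)) < ⊤ := by
  have hint : IntegrableOn (fun s : ℝ => s ^ (lam - 1) * Real.exp (-x * s)) (Set.Ioi 0) := by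
    have := integrableOn_rpow_mul_exp_neg_mul_rpow (p := 1) (s := lam - 1) (b := x)
      (by linarith) one_pos hx
    refine this.congr_fun (fun s hs => ?_) measurableSet_Ioi
    simp only [Real.rpow_one]
  have h2 : IntegrableOn (fun s : ℝ => Real.exp (-x * s) * s ^ (lam - 1)) (Set.Ioi 0) := by
    refine hint.congr_fun (fun s hs => mul_comm _ _) measurableSet_Ioi
  exact h2.lintegral_lt_top

lemma inner_anti (μ : Measure ℝ) (f : ℝ → ℝ≥0∞) :
    Antitone fun s : ℝ => ∫⁻ t in Set.Ioi s, f t ∂μ :=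
  fun _ _ hab => lintegral_mono_set (Set.Ioi_subset_Ioi hab)

lemma meas_inner (μ : Measure ℝ) (f : ℝ → ℝ≥0∞) :
    Measurable fun s : ℝ => ∫⁻ t in Set.Ioi s, f t ∂μ :=
  (inner_anti μ f).measurable

lemma meas_nuIoi (ν : Measure ℝ) : Measurable fun s : ℝ => ν (Set.Ioi s) := by
  have : Antitone fun s : ℝ => ν (Set.Ioi s) :=
    fun _ _ hab => measure_mono (Set.Ioi_subset_Ioi hab)
  exact this.measurable

lemma main_iff (lam x : ℝ) (hlam : 0 < lam) (hx : 0 < x) (μ : Measure ℝ) :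
    (∫⁻ s in Set.Ioi (0 : ℝ),
          ENNReal.ofReal (Real.exp (-x * s) * s ^ (lam - 1)) *
            (∫⁻ t in Set.Ioi s, ENNReal.ofReal (t ^ (-lam)) ∂μ) < ⊤)
      ↔ (μ (Set.Ioc 0 1) < ⊤ ∧ ∫⁻ t in Set.Ioi (1 : ℝ), ENNReal.ofReal (t ^ (-lam)) ∂μ < ⊤) := by
  set W : ℝ → ℝ≥0∞ := fun s => ENNReal.ofReal (Real.exp (-x * s) * s ^ (lam - 1)) with hWdef
  set f : ℝ → ℝ≥0∞ := fun t => ENNReal.ofReal (t ^ (-lam)) with hfdef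
  have hW : Measurable W := wmeas x lam
  have hf : Measurable f := fmeas lam
  set F : ℝ≥0∞ := ∫⁻ s in Set.Ioi (0 : ℝ), W s * (∫⁻ t in Set.Ioi s, f t ∂μ) with hFdef
  constructor
  · -- forward
    intro hF
    -- skeleton lower bound
    have skeleton : ∀ ε : ℝ, 0 < ε → ∀ Q : ℝ≥0∞,
        (∀ s ∈ Set.Ioo (0:ℝ) ε, Q ≤ ∫⁻ t in Set.Ioi s, f t ∂μ) →
        (∫⁻ s in Set.Ioo (0:ℝ) ε, W s) * Q ≤ F := by
      intro ε hε Q hQ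
      calc (∫⁻ s in Set.Ioo (0:ℝ) ε, W s) * Q = ∫⁻ s in Set.Ioo (0:ℝ) ε, W s * Q :=
            (lintegral_mul_const Q hW).symm
        _ ≤ ∫⁻ s in Set.Ioo (0:ℝ) ε, W s * (∫⁻ t in Set.Ioi s, f t ∂μ) := by
            refine setLIntegral_mono (hW.mul (meas_inner μ f)) fun s hs => ?_
            exact mul_le_mul_right (hQ s hs) _
        _ ≤ F := lintegral_mono_set Set.Ioo_subset_Ioi_self
    -- part B
    have hB : ∫⁻ t in Set.Ioi (1:ℝ), f t ∂μ < ⊤ := by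
      have h1 := skeleton 1 one_pos (∫⁻ t in Set.Ioi (1:ℝ), f t ∂μ)
        (fun s hs => lintegral_mono_set (Set.Ioi_subset_Ioi hs.2.le))
      have hc : (0:ℝ≥0∞) < ∫⁻ s in Set.Ioo (0:ℝ) 1, W s := by
        refine lt_of_lt_of_le ?_ (lower_bound hlam hx one_pos)
        rw [Real.one_rpow]
        exact ENNReal.ofReal_pos.mpr (by positivity)
      by_contra htop
      rw [not_lt, top_le_iff] at htop
      rw [htop, ENNReal.mul_top hc.ne', top_le_iff] at h1
      exact hF.ne h1
    -- part A
    refine ⟨?_, hB⟩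
    set c' : ℝ≥0∞ := ENNReal.ofReal (Real.exp (-x) / lam) with hc'def
    have hc'pos : 0 < c' := ENNReal.ofReal_pos.mpr (by positivity)
    have key : ∀ n : ℕ, c' * μ (Set.Ioc (1/(n+1) : ℝ) 1) ≤ F := by
      intro n
      set ε : ℝ := 1/(n+1) with hεdef
      have hε : 0 < ε := by positivity
      have hε1 : ε ≤ 1 := by
        rw [hεdef, div_le_one (by positivity)]
        simp
      set m : ℝ≥0∞ := μ (Set.Ioc ε 1) with hmdef
      -- first : m < ⊤
      have hmle : ∀ s ∈ Set.Ioo (0:ℝ) ε, m ≤ ∫⁻ t in Set.Ioi s, f t ∂μ := by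
        intro s hs
        calc m = ∫⁻ _ in Set.Ioc ε 1, (1:ℝ≥0∞) ∂μ := (setLIntegral_one _).symm
          _ ≤ ∫⁻ t in Set.Ioc ε 1, f t ∂μ := by
              refine setLIntegral_mono hf fun t ht => ?_
              refine ENNReal.one_le_ofReal.mpr ?_
              exact Real.one_le_rpow_of_pos_of_le_one_of_nonpos (hε.trans ht.1) ht.2
                (neg_nonpos.mpr hlam.le)
          _ ≤ ∫⁻ t in Set.Ioi s, f t ∂μ := lintegral_mono_set
              (fun t ht => lt_trans hs.2 ht.1)
      have hmfin : m ≠ ⊤ := by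
        have h1 := skeleton ε hε m hmle
        have hc : (0:ℝ≥0∞) < ∫⁻ s in Set.Ioo (0:ℝ) ε, W s := by
          refine lt_of_lt_of_le ?_ (lower_bound hlam hx hε)
          refine ENNReal.ofReal_pos.mpr ?_
          have := Real.rpow_pos_of_pos hε lam
          positivity
        intro htop
        rw [htop, ENNReal.mul_top hc.ne', top_le_iff] at h1
        exact hF.ne h1
      -- second : uniform bound
      set ν : Measure ℝ := (μ.restrict (Set.Ioc ε 1)).withDensity f with hνdef
      have hνap : ∀ S : Set ℝ, MeasurableSet S → ν S = ∫⁻ t in S ∩ Set.Ioc ε 1, f t ∂μ := by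
        intro S hS
        rw [hνdef, withDensity_apply _ hS, Measure.restrict_restrict hS]
      haveI : IsFiniteMeasure ν := by
        constructor
        rw [hνap Set.univ MeasurableSet.univ, Set.univ_inter]
        calc ∫⁻ t in Set.Ioc ε 1, f t ∂μ
            ≤ ∫⁻ _ in Set.Ioc ε 1, ENNReal.ofReal (ε ^ (-lam)) ∂μ := by
              refine setLIntegral_mono measurable_const fun t ht => ?_
              exact ENNReal.ofReal_le_ofReal
                (Real.rpow_le_rpow_of_nonpos hε ht.1.le (neg_nonpos.mpr hlam.le))
          _ = ENNReal.ofReal (ε ^ (-lam)) * m := setLIntegral_const _ _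
          _ < ⊤ := ENNReal.mul_lt_top ENNReal.ofReal_lt_top (lt_top_iff_ne_top.mpr hmfin)
      have hle1 : ∫⁻ s in Set.Ioi (0:ℝ), W s * ν (Set.Ioi s) ≤ F := by
        refine setLIntegral_mono (hW.mul (meas_inner μ f)) fun s hs => ?_
        refine mul_le_mul_right ?_ _
        rw [hνap _ measurableSet_Ioi]
        exact lintegral_mono_set Set.inter_subset_left
      rw [swap_lemma ν hW] at hle1
      -- ν-a.e. t lies in Ioc ε 1
      have hae : ∀ᵐ t ∂ν, t ∈ Set.Ioc ε 1 := by
        rw [ae_iff]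
        have : ν {a | a ∉ Set.Ioc ε 1} = ν (Set.Ioc ε 1)ᶜ := rfl
        rw [this, hνap _ measurableSet_Ioc.compl, Set.compl_inter_self,
          Measure.restrict_empty, lintegral_zero_measure]
      have key2 : c' * m ≤ ∫⁻ t, (∫⁻ s in Set.Ioo 0 t, W s) ∂ν := by
        have step1 : ∫⁻ t, ENNReal.ofReal (Real.exp (-x * t) * (t ^ lam / lam)) ∂ν
            ≤ ∫⁻ t, (∫⁻ s in Set.Ioo 0 t, W s) ∂ν := by
          refine lintegral_mono_ae ?_
          filter_upwards [hae] with t ht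
          exact lower_bound hlam hx (hε.trans ht.1)
        refine le_trans ?_ step1
        have hgmeas : Measurable fun t : ℝ =>
            ENNReal.ofReal (Real.exp (-x * t) * (t ^ lam / lam)) := by fun_prop
        rw [hνdef, lintegral_withDensity_eq_lintegral_mul _ hf hgmeas]
        calc c' * m = ∫⁻ _ in Set.Ioc ε 1, c' ∂μ := (setLIntegral_const _ _).symm
          _ ≤ ∫⁻ t in Set.Ioc ε 1,
                (f * fun t => ENNReal.ofReal (Real.exp (-x * t) * (t ^ lam / lam))) t ∂μ := by
              refine setLIntegral_mono (hf.mul hgmeas) fun t ht => ?_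
              have ht0 : (0:ℝ) < t := hε.trans ht.1
              have heq : t ^ (-lam) * (Real.exp (-x * t) * (t ^ lam / lam))
                  = Real.exp (-x * t) / lam := by
                rw [Real.rpow_neg ht0.le]
                have hpos : (0:ℝ) < t ^ lam := Real.rpow_pos_of_pos ht0 lam
                field_simp
              simp only [Pi.mul_apply, hfdef]
              rw [← ENNReal.ofReal_mul (Real.rpow_nonneg ht0.le _), heq, hc'def]
              refine ENNReal.ofReal_le_ofReal ?_
              gcongr
              nlinarith [ht.2]
      exact le_trans key2 hle1
    -- combine via monotone union
    have hunion : Set.Ioc (0:ℝ) 1 = ⋃ n : ℕ, Set.Ioc (1/(n+1) : ℝ) 1 := by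
      ext t
      simp only [Set.mem_Ioc, Set.mem_iUnion]
      constructor
      · rintro ⟨h0, h1⟩
        obtain ⟨n, hn⟩ := exists_nat_one_div_lt h0
        exact ⟨n, hn, h1⟩
      · rintro ⟨n, hn, h1⟩
        exact ⟨lt_trans (by positivity) hn, h1⟩
    have hmono : Monotone fun n : ℕ => Set.Ioc (1/(n+1) : ℝ) 1 := by
      intro a b hab
      refine Set.Ioc_subset_Ioc ?_ le_rfl
      have hab' : (a:ℝ) ≤ b := Nat.cast_le.mpr hab
      exact one_div_le_one_div_of_le (by positivity) (by linarith)
    have hsup : c' * μ (Set.Ioc (0:ℝ) 1) ≤ F := by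
      rw [hunion, hmono.directed_le.measure_iUnion, ENNReal.mul_iSup]
      exact iSup_le key
    by_contra htop
    rw [not_lt, top_le_iff] at htop
    rw [htop, ENNReal.mul_top hc'pos.ne', top_le_iff] at hsup
    exact hF.ne hsup
  · -- backward
    rintro ⟨hA, hB⟩
    set ν : Measure ℝ := (μ.restrict (Set.Ioc 0 1)).withDensity f with hνdef
    have hνap : ∀ S : Set ℝ, MeasurableSet S → ν S = ∫⁻ t in S ∩ Set.Ioc 0 1, f t ∂μ := by
      intro S hS
      rw [hνdef, withDensity_apply _ hS, Measure.restrict_restrict hS]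
    have hνfin : ∀ ε : ℝ, 0 < ε → ν (Set.Ioi ε) < ⊤ := by
      intro ε hε
      rw [hνap _ measurableSet_Ioi]
      calc ∫⁻ t in Set.Ioi ε ∩ Set.Ioc 0 1, f t ∂μ
          ≤ ∫⁻ _ in Set.Ioi ε ∩ Set.Ioc 0 1, ENNReal.ofReal (ε ^ (-lam)) ∂μ := by
            refine setLIntegral_mono measurable_const fun t ht => ?_
            exact ENNReal.ofReal_le_ofReal
              (Real.rpow_le_rpow_of_nonpos hε ht.1.le (neg_nonpos.mpr hlam.le))
        _ = ENNReal.ofReal (ε ^ (-lam)) * μ (Set.Ioi ε ∩ Set.Ioc 0 1) := setLIntegral_const _ _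
        _ ≤ ENNReal.ofReal (ε ^ (-lam)) * μ (Set.Ioc 0 1) :=
            mul_le_mul_right (measure_mono Set.inter_subset_right) _
        _ < ⊤ := ENNReal.mul_lt_top ENNReal.ofReal_lt_top hA
    haveI : SigmaFinite ν := by
      refine ⟨⟨⟨fun n => Set.Iic 0 ∪ Set.Ioi (1/(n+1) : ℝ), fun _ => trivial, ?_, ?_⟩⟩⟩
      · intro n
        refine lt_of_le_of_lt (measure_union_le _ _) ?_
        have h0 : ν (Set.Iic 0) = 0 := by
          rw [hνap _ measurableSet_Iic]
          have : Set.Iic (0:ℝ) ∩ Set.Ioc 0 1 = ∅ := by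
            ext t
            constructor
            · rintro ⟨h1, h2, -⟩
              exact absurd h2 (not_lt.mpr h1)
            · exact fun h => h.elim
          rw [this, Measure.restrict_empty, lintegral_zero_measure]
        rw [h0, zero_add]
        exact hνfin _ (by positivity)
      · ext t
        simp only [Set.mem_iUnion, Set.mem_union, Set.mem_Iic, Set.mem_Ioi, Set.mem_univ,
          iff_true]
        rcases le_or_gt t 0 with h | h
        · exact ⟨0, Or.inl h⟩
        · obtain ⟨n, hn⟩ := exists_nat_one_div_lt h
          exact ⟨n, Or.inr hn⟩
    -- F ≤ T1 + T2
    have hsplit : ∀ s : ℝ, 0 < s → (∫⁻ t in Set.Ioi s, f t ∂μ)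
        ≤ ν (Set.Ioi s) + ∫⁻ t in Set.Ioi (1:ℝ), f t ∂μ := by
      intro s hs
      calc ∫⁻ t in Set.Ioi s, f t ∂μ
          ≤ ∫⁻ t in (Set.Ioi s ∩ Set.Ioc 0 1) ∪ Set.Ioi 1, f t ∂μ := by
            refine lintegral_mono_set fun t ht => ?_
            rcases le_or_gt t 1 with h1 | h1
            · exact Or.inl ⟨ht, hs.trans ht, h1⟩
            · exact Or.inr h1
        _ ≤ (∫⁻ t in Set.Ioi s ∩ Set.Ioc 0 1, f t ∂μ) + ∫⁻ t in Set.Ioi (1:ℝ), f t ∂μ :=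
            lintegral_union_le _ _ _
        _ = ν (Set.Ioi s) + ∫⁻ t in Set.Ioi (1:ℝ), f t ∂μ := by
            rw [hνap _ measurableSet_Ioi]
    have hFle : F ≤ (∫⁻ s in Set.Ioi (0:ℝ), W s * ν (Set.Ioi s)) +
        (∫⁻ s in Set.Ioi (0:ℝ), W s) * (∫⁻ t in Set.Ioi (1:ℝ), f t ∂μ) := by
      rw [← lintegral_mul_const _ hW, ← lintegral_add_left (f := fun s => W s * ν (Set.Ioi s)) (hW.mul (meas_nuIoi ν))]
      refine setLIntegral_mono ((hW.mul (meas_nuIoi ν)).add (hW.mul_const _)) fun s hs => ?_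
      rw [← mul_add]
      exact mul_le_mul_right (hsplit s hs) _
    refine lt_of_le_of_lt hFle (ENNReal.add_lt_top.mpr ⟨?_, ?_⟩)
    · -- T1
      rw [swap_lemma ν hW]
      have hae : ∀ᵐ t ∂ν, t ∈ Set.Ioc (0:ℝ) 1 := by
        rw [ae_iff]
        have : ν {a | a ∉ Set.Ioc (0:ℝ) 1} = ν (Set.Ioc (0:ℝ) 1)ᶜ := rfl
        rw [this, hνap _ measurableSet_Ioc.compl, Set.compl_inter_self,
          Measure.restrict_empty, lintegral_zero_measure]
      have step1 : ∫⁻ t, (∫⁻ s in Set.Ioo 0 t, W s) ∂ν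
          ≤ ∫⁻ t, ENNReal.ofReal (t ^ lam / lam) ∂ν := by
        refine lintegral_mono_ae ?_
        filter_upwards [hae] with t ht
        exact upper_bound hlam hx ht.1
      refine lt_of_le_of_lt step1 ?_
      have hgmeas : Measurable fun t : ℝ => ENNReal.ofReal (t ^ lam / lam) := by fun_prop
      rw [hνdef, lintegral_withDensity_eq_lintegral_mul _ hf hgmeas]
      calc ∫⁻ t in Set.Ioc (0:ℝ) 1, (f * fun t => ENNReal.ofReal (t ^ lam / lam)) t ∂μ
          ≤ ∫⁻ _ in Set.Ioc (0:ℝ) 1, ENNReal.ofReal (1 / lam) ∂μ := by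
            refine setLIntegral_mono measurable_const fun t ht => ?_
            have ht0 : (0:ℝ) < t := ht.1
            have heq : t ^ (-lam) * (t ^ lam / lam) = 1 / lam := by
              rw [Real.rpow_neg ht0.le]
              have hpos : (0:ℝ) < t ^ lam := Real.rpow_pos_of_pos ht0 lam
              field_simp
            simp only [Pi.mul_apply, hfdef]
            rw [← ENNReal.ofReal_mul (Real.rpow_nonneg ht0.le _), heq]
        _ = ENNReal.ofReal (1 / lam) * μ (Set.Ioc 0 1) := setLIntegral_const _ _
        _ < ⊤ := ENNReal.mul_lt_top ENNReal.ofReal_lt_top hA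
    · -- T2
      exact ENNReal.mul_lt_top (gamma_finite hlam hx) hB

theorem integrability_remark (lam : ℝ) (hlam : 0 < lam) (μ : Measure ℝ) :
    ((∃ x : ℝ, 0 < x ∧
        ∫⁻ s in Set.Ioi (0 : ℝ),
          ENNReal.ofReal (Real.exp (-x * s) * s ^ (lam - 1)) *
            (∫⁻ t in Set.Ioi s, ENNReal.ofReal (t ^ (-lam)) ∂μ) < ⊤)
      ↔ (μ (Set.Ioc 0 1) < ⊤ ∧ ∫⁻ t in Set.Ioi (1 : ℝ), ENNReal.ofReal (t ^ (-lam)) ∂μ < ⊤))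
    ∧
    ((∀ x : ℝ, 0 < x →
        ∫⁻ s in Set.Ioi (0 : ℝ),
          ENNReal.ofReal (Real.exp (-x * s) * s ^ (lam - 1)) *
            (∫⁻ t in Set.Ioi s, ENNReal.ofReal (t ^ (-lam)) ∂μ) < ⊤)
      ↔ (μ (Set.Ioc 0 1) < ⊤ ∧ ∫⁻ t in Set.Ioi (1 : ℝ), ENNReal.ofReal (t ^ (-lam)) ∂μ < ⊤)) := by
  constructor
  · constructor
    · rintro ⟨x, hx, h⟩
      exact (main_iff lam x hlam hx μ).mp h
    · intro h
      exact ⟨1, one_pos, (main_iff lam 1 hlam one_pos μ).mpr h⟩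
  · constructor
    · intro h
      exact (main_iff lam 1 hlam one_pos μ).mp (h 1 one_pos)
    · intro h x hx
      exact (main_iff lam x hlam hx μ).mpr h
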